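/- The function R̃(p) = ∫₀^p ( ∫₀^v v′·(J−1)·F(v′)^{J−2}·f(v′) dv′ ) f(v) dv + ∫_p^1 ( ∫_{v−p}^v v′·(J−1)·F(v′)^{J−2}·f(v′) dv′ ) f(v) dv is monotone (weakly increasing) in p on [0,1]. (Hence platform revenue R(p_B) = λ·J·R̃(p_B) under data-augmented bidding is increasing in the platform's market share λ, since p_B is increasing in λ.) -/
import Mathlib


open intervalIntegral

private lemma rev_mono_aux (f g : ℝ → ℝ)
    (hf_cont : ContinuousOn f (Set.Icc 0 1))
    (hf_nonneg : ∀ x ∈ Set.Icc (0:ℝ) 1, 0 ≤ f x)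
    (hg_cont : ContinuousOn g (Set.Icc 0 1))
    (hg_nonneg : ∀ x ∈ Set.Icc (0:ℝ) 1, 0 ≤ g x) :
    MonotoneOn
      (fun p : ℝ =>
        (∫ v in (0:ℝ)..p, (∫ v' in (0:ℝ)..v, g v') * f v)
        + ∫ v in p..1, (∫ v' in (v - p)..v, g v') * f v)
      (Set.Icc 0 1) := by
  set G : ℝ → ℝ := fun x => ∫ t in (0:ℝ)..x, g t with hGdef
  have hsub : ∀ a b : ℝ, a ∈ Set.Icc (0:ℝ) 1 → b ∈ Set.Icc (0:ℝ) 1 →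
      Set.uIcc a b ⊆ Set.Icc (0:ℝ) 1 := fun a b ha hb => Set.uIcc_subset_Icc ha hb
  have hgi : ∀ a b : ℝ, a ∈ Set.Icc (0:ℝ) 1 → b ∈ Set.Icc (0:ℝ) 1 →
      IntervalIntegrable g MeasureTheory.volume a b := fun a b ha hb =>
    (hg_cont.mono (hsub a b ha hb)).intervalIntegrable
  have h01 : Set.uIcc (0:ℝ) 1 = Set.Icc (0:ℝ) 1 := Set.uIcc_of_le zero_le_one
  have hG_cont : ContinuousOn G (Set.Icc 0 1) := by
    have := continuousOn_primitive_interval (a := (0:ℝ)) (b := 1)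
      (μ := MeasureTheory.volume) (f := g) (by rw [h01]; exact hg_cont.integrableOn_Icc)
    rwa [h01] at this
  have hG_nonneg : ∀ x ∈ Set.Icc (0:ℝ) 1, 0 ≤ G x := fun x hx =>
    intervalIntegral.integral_nonneg hx.1
      (fun u hu => hg_nonneg u ⟨hu.1, hu.2.trans hx.2⟩)
  have hG_mono : ∀ a b : ℝ, a ∈ Set.Icc (0:ℝ) 1 → b ∈ Set.Icc (0:ℝ) 1 → a ≤ b →
      G a ≤ G b := by
    intro a b ha hb hab
    have h : G b - G a = ∫ t in a..b, g t :=
      integral_interval_sub_left (hgi 0 b (Set.left_mem_Icc.2 zero_le_one) hb)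
        (hgi 0 a (Set.left_mem_Icc.2 zero_le_one) ha)
    have : 0 ≤ G b - G a := by
      rw [h]
      exact intervalIntegral.integral_nonneg hab
        (fun u hu => hg_nonneg u ⟨ha.1.trans hu.1, hu.2.trans hb.2⟩)
    linarith
  -- integrability of products
  have hGf_int : ∀ a b : ℝ, a ∈ Set.Icc (0:ℝ) 1 → b ∈ Set.Icc (0:ℝ) 1 →
      IntervalIntegrable (fun v => G v * f v) MeasureTheory.volume a b := fun a b ha hb =>
    ((hG_cont.mul hf_cont).mono (hsub a b ha hb)).intervalIntegrable
  have hGpf_int : ∀ p : ℝ, p ∈ Set.Icc (0:ℝ) 1 →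
      IntervalIntegrable (fun v => G (v - p) * f v) MeasureTheory.volume p 1 := by
    intro p hp
    apply ContinuousOn.intervalIntegrable
    apply ContinuousOn.mul
    · apply hG_cont.comp (Continuous.continuousOn (by continuity))
      intro v hv
      rw [Set.uIcc_of_le hp.2] at hv
      exact ⟨by simp [sub_nonneg]; exact hv.1, by simp; linarith [hv.2, hp.1]⟩
    · exact hf_cont.mono (hsub p 1 hp (Set.right_mem_Icc.2 zero_le_one))
  -- representation
  have hrep : ∀ p ∈ Set.Icc (0:ℝ) 1,
      ((∫ v in (0:ℝ)..p, (∫ v' in (0:ℝ)..v, g v') * f v)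
        + ∫ v in p..1, (∫ v' in (v - p)..v, g v') * f v)
      = (∫ v in (0:ℝ)..1, G v * f v) - ∫ v in p..1, G (v - p) * f v := by
    intro p hp
    have h1 : (∫ v in p..1, (∫ v' in (v - p)..v, g v') * f v)
        = ∫ v in p..1, (G v * f v - G (v - p) * f v) := by
      apply intervalIntegral.integral_congr
      intro v hv
      rw [Set.uIcc_of_le hp.2] at hv
      have hv1 : v ∈ Set.Icc (0:ℝ) 1 := ⟨hp.1.trans hv.1, hv.2⟩
      have hvp : v - p ∈ Set.Icc (0:ℝ) 1 := ⟨by linarith [hv.1], by linarith [hp.1, hv.2]⟩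
      have : (∫ v' in (v - p)..v, g v') = G v - G (v - p) :=
        (integral_interval_sub_left (hgi 0 v (Set.left_mem_Icc.2 zero_le_one) hv1)
          (hgi 0 (v - p) (Set.left_mem_Icc.2 zero_le_one) hvp)).symm
      simp only [this, sub_mul]
    rw [h1, intervalIntegral.integral_sub
      (hGf_int p 1 hp (Set.right_mem_Icc.2 zero_le_one)) (hGpf_int p hp),
      ← intervalIntegral.integral_add_adjacent_intervals
        (hGf_int 0 p (Set.left_mem_Icc.2 zero_le_one) hp)
        (hGf_int p 1 hp (Set.right_mem_Icc.2 zero_le_one))]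
    ring
  intro p₁ hp₁ p₂ hp₂ hle
  simp only
  rw [hrep p₁ hp₁, hrep p₂ hp₂]
  have key : (∫ v in p₂..1, G (v - p₂) * f v) ≤ ∫ v in p₁..1, G (v - p₁) * f v := by
    have step1 : (∫ v in p₂..1, G (v - p₂) * f v) ≤ ∫ v in p₂..1, G (v - p₁) * f v := by
      apply intervalIntegral.integral_mono_on hp₂.2 (hGpf_int p₂ hp₂)
      · -- integrability of v ↦ G (v - p₁) * f v on [p₂, 1]
        exact (hGpf_int p₁ hp₁).mono_set
          (by rw [Set.uIcc_of_le hp₂.2, Set.uIcc_of_le hp₁.2]; exact Set.Icc_subset_Icc hle le_rfl)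
      · intro v hv
        have hvp1 : v - p₁ ∈ Set.Icc (0:ℝ) 1 :=
          ⟨by linarith [hv.1, hle], by linarith [hv.2, hp₁.1]⟩
        have hvp2 : v - p₂ ∈ Set.Icc (0:ℝ) 1 :=
          ⟨by linarith [hv.1], by linarith [hv.2, hp₂.1]⟩
        exact mul_le_mul_of_nonneg_right
          (hG_mono _ _ hvp2 hvp1 (by linarith))
          (hf_nonneg v ⟨by linarith [hv.1, hp₂.1], hv.2⟩)
    have step2 : (∫ v in p₂..1, G (v - p₁) * f v) ≤ ∫ v in p₁..1, G (v - p₁) * f v := by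
      have hi12 : IntervalIntegrable (fun v => G (v - p₁) * f v) MeasureTheory.volume p₁ p₂ :=
        (hGpf_int p₁ hp₁).mono_set
          (by rw [Set.uIcc_of_le hle, Set.uIcc_of_le hp₁.2]; exact Set.Icc_subset_Icc le_rfl hp₂.2)
      have hi21 : IntervalIntegrable (fun v => G (v - p₁) * f v) MeasureTheory.volume p₂ 1 :=
        (hGpf_int p₁ hp₁).mono_set
          (by rw [Set.uIcc_of_le hp₂.2, Set.uIcc_of_le hp₁.2]; exact Set.Icc_subset_Icc hle le_rfl)
      have hsplit : (∫ v in p₁..p₂, G (v - p₁) * f v) + (∫ v in p₂..1, G (v - p₁) * f v)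
          = ∫ v in p₁..1, G (v - p₁) * f v :=
        intervalIntegral.integral_add_adjacent_intervals hi12 hi21
      have hnn : 0 ≤ ∫ v in p₁..p₂, G (v - p₁) * f v := by
        apply intervalIntegral.integral_nonneg hle
        intro u hu
        have hup1 : u - p₁ ∈ Set.Icc (0:ℝ) 1 :=
          ⟨by linarith [hu.1], by linarith [hu.2, hp₂.2, hp₁.1]⟩
        exact mul_nonneg (hG_nonneg _ hup1)
          (hf_nonneg u ⟨by linarith [hu.1, hp₁.1], by linarith [hu.2, hp₂.2]⟩)
      linarith
    linarith
  linarith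

/-- The normalized platform-revenue function R̃ is weakly
increasing in the posted price p on [0,1]; hence platform revenue under
data-augmented bidding is increasing in the platform's market share. -/
theorem platform_revenue_monotone
    (f F : ℝ → ℝ)
    (hf_cont : ContinuousOn f (Set.Icc 0 1))
    (hf_pos : ∀ x ∈ Set.Icc (0:ℝ) 1, 0 < f x)
    (hf_logconcave : ConcaveOn ℝ (Set.Icc 0 1) (Real.log ∘ f))
    (hf_int : (∫ t in (0:ℝ)..1, f t) = 1)
    (hF : ∀ x, F x = ∫ t in (0:ℝ)..x, f t)
    (J : ℕ) (hJ : 2 ≤ J) :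
    MonotoneOn
      (fun p : ℝ =>
        (∫ v in (0:ℝ)..p,
            (∫ v' in (0:ℝ)..v, v' * (((J : ℝ) - 1) * F v' ^ (J - 2) * f v')) * f v)
        + ∫ v in p..1,
            (∫ v' in (v - p)..v, v' * (((J : ℝ) - 1) * F v' ^ (J - 2) * f v')) * f v)
      (Set.Icc 0 1) := by
  have h01 : Set.uIcc (0:ℝ) 1 = Set.Icc (0:ℝ) 1 := Set.uIcc_of_le zero_le_one
  have hF_cont : ContinuousOn F (Set.Icc 0 1) := by
    have hprim := continuousOn_primitive_interval (a := (0:ℝ)) (b := 1)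
      (μ := MeasureTheory.volume) (f := f) (by rw [h01]; exact hf_cont.integrableOn_Icc)
    rw [h01] at hprim
    exact hprim.congr (fun x _ => hF x)
  have hJ1 : (0:ℝ) ≤ (J:ℝ) - 1 := by
    have : (2:ℝ) ≤ (J:ℝ) := by exact_mod_cast hJ
    linarith
  have hF_nonneg : ∀ x ∈ Set.Icc (0:ℝ) 1, 0 ≤ F x := by
    intro x hx
    rw [hF x]
    exact intervalIntegral.integral_nonneg hx.1
      (fun u hu => (hf_pos u ⟨hu.1, hu.2.trans hx.2⟩).le)
  exact rev_mono_aux f (fun v' => v' * (((J : ℝ) - 1) * F v' ^ (J - 2) * f v'))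
    hf_cont (fun x hx => (hf_pos x hx).le)
    (continuousOn_id.mul ((continuousOn_const.mul (hF_cont.pow _)).mul hf_cont))
    (fun x hx => mul_nonneg hx.1
      (mul_nonneg (mul_nonneg hJ1 (pow_nonneg (hF_nonneg x hx) _)) ((hf_pos x hx).le)))
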